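/- Let A be an n×n matrix with strictly positive entries whose rows each sum to 1, and suppose the entrywise logarithm log A has rank at most d_k. Then there exist matrices Q, K ∈ ℝ^{n×d_k} such that softmax(QKᵀ/√d_k) = A, where softmax is applied row-wise. -/

import Mathlib

noncomputable def rowSoftmax {n : ℕ} (M : Matrix (Fin n) (Fin n) ℝ) :
    Matrix (Fin n) (Fin n) ℝ :=
  Matrix.of fun i j => Real.exp (M i j) / ∑ k, Real.exp (M i k)

open Matrix
lemma exists_factorization {n dk : ℕ} (M : Matrix (Fin n) (Fin n) ℝ)
    (hrank : M.rank ≤ dk) :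
    ∃ Q K : Matrix (Fin n) (Fin dk) ℝ, M = Q * Kᵀ := by
  set V : Submodule ℝ (Fin n → ℝ) := Submodule.span ℝ (Set.range Mᵀ) with hV
  have hfin : Module.finrank ℝ V ≤ dk := by
    rw [hV]; rw [Matrix.rank_eq_finrank_span_cols] at hrank; exact hrank
  set r : ℕ := Module.finrank ℝ V with hr
  let b : Module.Basis (Fin r) ℝ V := Module.finBasis ℝ V
  have hmem : ∀ j, Mᵀ j ∈ V := fun j => Submodule.subset_span ⟨j, rfl⟩
  let c : Fin n → V := fun j => ⟨Mᵀ j, hmem j⟩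
  refine ⟨Matrix.of fun i k => if h : (k : ℕ) < r then (b ⟨k, h⟩ : Fin n → ℝ) i else 0,
    Matrix.of fun j k => if h : (k : ℕ) < r then b.repr (c j) ⟨k, h⟩ else 0, ?_⟩
  ext i j
  rw [Matrix.mul_apply]
  have key : (c j : Fin n → ℝ) i = ∑ k : Fin r, b.repr (c j) k * (b k : Fin n → ℝ) i := by
    conv_lhs => rw [← b.sum_repr (c j)]
    rw [Submodule.coe_sum]
    simp [Finset.sum_apply]
  have hrle : r ≤ dk := hfin
  set f : Fin dk → ℝ := fun k =>
    (if h : (k : ℕ) < r then (b ⟨k, h⟩ : Fin n → ℝ) i else 0) *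
    (if h : (k : ℕ) < r then b.repr (c j) ⟨k, h⟩ else 0) with hf
  have hsum : ∑ k : Fin dk, f k = ∑ k : Fin r, b.repr (c j) k * (b k : Fin n → ℝ) i := by
    have h1 : ∑ k : Fin dk, f k = ∑ k ∈ Finset.univ.map (Fin.castLEEmb hrle), f k := by
      refine (Finset.sum_subset (Finset.subset_univ _) ?_).symm
      intro x _ hx
      have hxr : ¬ (x : ℕ) < r := by
        intro h
        exact hx (Finset.mem_map.mpr ⟨⟨x, h⟩, Finset.mem_univ _, by ext; simp⟩)
      simp [hf, hxr]
    rw [h1, Finset.sum_map]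
    refine Finset.sum_congr rfl fun x _ => ?_
    have hx : ((Fin.castLEEmb hrle x : Fin dk) : ℕ) < r := by simp
    simp only [hf]
    rw [dif_pos hx, dif_pos hx]
    have : (⟨((Fin.castLEEmb hrle x : Fin dk) : ℕ), hx⟩ : Fin r) = x := by ext; simp
    rw [this]; ring
  calc M i j = (c j : Fin n → ℝ) i := rfl
    _ = ∑ k : Fin dk, f k := by rw [key, hsum]
    _ = ∑ k : Fin dk, Matrix.of (fun i k => if h : (k : ℕ) < r then (b ⟨k, h⟩ : Fin n → ℝ) i else 0) i k *
        (Matrix.of fun j k => if h : (k : ℕ) < r then b.repr (c j) ⟨k, h⟩ else 0)ᵀ k j := rfl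

/-- If `A` is row stochastic with positive entries and `rank (log A) ≤ d_k`,
then there are `Q K : ℝ^{n×d_k}` with `softmax (Q * Kᵀ / √d_k) = A`. -/
theorem exists_QK_of_rank_log_le {n dk : ℕ} (hdk : 0 < dk)
    (A : Matrix (Fin n) (Fin n) ℝ)
    (hpos : ∀ i j, 0 < A i j) (hrow : ∀ i, ∑ j, A i j = 1)
    (hrank : (A.map Real.log).rank ≤ dk) :
    ∃ Q K : Matrix (Fin n) (Fin dk) ℝ,
      rowSoftmax (Matrix.of fun i j =>
        (Q * K.transpose) i j / Real.sqrt dk) = A := by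
  obtain ⟨Q0, K, hQK⟩ := exists_factorization (A.map Real.log) hrank
  have hs : (0:ℝ) < Real.sqrt dk := Real.sqrt_pos.mpr (by exact_mod_cast hdk)
  refine ⟨Real.sqrt dk • Q0, K, ?_⟩
  have hM : (Matrix.of fun i j => ((Real.sqrt dk • Q0) * Kᵀ) i j / Real.sqrt dk)
      = A.map Real.log := by
    ext i j
    simp only [Matrix.of_apply, Matrix.smul_mul, Matrix.smul_apply, smul_eq_mul]
    rw [mul_div_cancel_left₀ _ (ne_of_gt hs), hQK]
  rw [hM]
  ext i j
  simp only [rowSoftmax, Matrix.of_apply, Matrix.map_apply,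
    Real.exp_log (hpos _ _)]
  rw [hrow i, div_one]
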